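/- For every integer A ≥ 3 and every t ∈ (0, π/(2A)], the inequality sin(2At)/(A·sin(2t)) ≤ (sin(At)/(A·sin(t)))⁴ holds. -/

import Mathlib

open Real Set

private lemma sin_ge_cubic (x : ℝ) (hx : 0 ≤ x) : x - x ^ 3 / 6 ≤ Real.sin x := by
  have mono : MonotoneOn (fun y : ℝ => Real.sin y - (y - y ^ 3 / 6)) (Ici 0) := by
    apply monotoneOn_of_deriv_nonneg (convex_Ici 0)
    · fun_prop
    · apply Differentiable.differentiableOn; fun_prop
    · intro y hy
      rw [interior_Ici] at hy
      have hd : HasDerivAt (fun y : ℝ => Real.sin y - (y - y ^ 3 / 6))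
          (Real.cos y - (1 - 3 * y ^ 2 / 6)) y := by
        have h1 : HasDerivAt (fun y : ℝ => y - y ^ 3 / 6) (1 - 3 * y ^ 2 / 6) y := by
          exact ((hasDerivAt_id y).sub ((hasDerivAt_pow 3 y).div_const 6)).congr_deriv (by norm_num <;> ring)
        exact (Real.hasDerivAt_sin y).sub h1
      rw [hd.deriv]
      nlinarith [Real.one_sub_sq_div_two_le_cos (x := y)]
  have h := mono (self_mem_Ici) (mem_Ici.2 hx) hx
  simp only [Real.sin_zero] at h
  nlinarith [h]

private lemma cos_le_quartic (x : ℝ) (hx : 0 ≤ x) :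
    Real.cos x ≤ 1 - x ^ 2 / 2 + x ^ 4 / 24 := by
  have mono : MonotoneOn (fun y : ℝ => (1 - y ^ 2 / 2 + y ^ 4 / 24) - Real.cos y) (Ici 0) := by
    apply monotoneOn_of_deriv_nonneg (convex_Ici 0)
    · fun_prop
    · apply Differentiable.differentiableOn; fun_prop
    · intro y hy
      rw [interior_Ici] at hy
      have hd : HasDerivAt (fun y : ℝ => (1 - y ^ 2 / 2 + y ^ 4 / 24) - Real.cos y)
          ((0 - 2 * y / 2 + 4 * y ^ 3 / 24) - (-Real.sin y)) y := by
        have h1 : HasDerivAt (fun y : ℝ => 1 - y ^ 2 / 2 + y ^ 4 / 24)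
            (0 - 2 * y / 2 + 4 * y ^ 3 / 24) y := by
          have := ((hasDerivAt_const y (1:ℝ)).sub ((hasDerivAt_pow 2 y).div_const 2)).add
            ((hasDerivAt_pow 4 y).div_const 24)
          exact this.congr_deriv (by norm_num <;> ring)
        exact h1.sub (Real.hasDerivAt_cos y)
      rw [hd.deriv]
      nlinarith [sin_ge_cubic y hy.le]
  have h := mono (self_mem_Ici) (mem_Ici.2 hx) hx
  simp only [Real.cos_zero] at h
  nlinarith [h]

private lemma sin_le_quintic (x : ℝ) (hx : 0 ≤ x) :
    Real.sin x ≤ x - x ^ 3 / 6 + x ^ 5 / 120 := by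
  have mono : MonotoneOn (fun y : ℝ => (y - y ^ 3 / 6 + y ^ 5 / 120) - Real.sin y) (Ici 0) := by
    apply monotoneOn_of_deriv_nonneg (convex_Ici 0)
    · fun_prop
    · apply Differentiable.differentiableOn; fun_prop
    · intro y hy
      rw [interior_Ici] at hy
      have hd : HasDerivAt (fun y : ℝ => (y - y ^ 3 / 6 + y ^ 5 / 120) - Real.sin y)
          ((1 - 3 * y ^ 2 / 6 + 5 * y ^ 4 / 120) - Real.cos y) y := by
        have h1 : HasDerivAt (fun y : ℝ => y - y ^ 3 / 6 + y ^ 5 / 120)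
            (1 - 3 * y ^ 2 / 6 + 5 * y ^ 4 / 120) y := by
          have := ((hasDerivAt_id y).sub ((hasDerivAt_pow 3 y).div_const 6)).add
            ((hasDerivAt_pow 5 y).div_const 120)
          exact this.congr_deriv (by norm_num <;> ring)
        exact h1.sub (Real.hasDerivAt_sin y)
      rw [hd.deriv]
      nlinarith [cos_le_quartic y hy.le]
  have h := mono (self_mem_Ici) (mem_Ici.2 hx) hx
  simp only [Real.sin_zero] at h
  nlinarith [h]

private lemma cos_ge_sextic (x : ℝ) (hx : 0 ≤ x) :
    1 - x ^ 2 / 2 + x ^ 4 / 24 - x ^ 6 / 720 ≤ Real.cos x := by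
  have mono : MonotoneOn
      (fun y : ℝ => Real.cos y - (1 - y ^ 2 / 2 + y ^ 4 / 24 - y ^ 6 / 720)) (Ici 0) := by
    apply monotoneOn_of_deriv_nonneg (convex_Ici 0)
    · fun_prop
    · apply Differentiable.differentiableOn; fun_prop
    · intro y hy
      rw [interior_Ici] at hy
      have hd : HasDerivAt
          (fun y : ℝ => Real.cos y - (1 - y ^ 2 / 2 + y ^ 4 / 24 - y ^ 6 / 720))
          ((-Real.sin y) - (0 - 2 * y / 2 + 4 * y ^ 3 / 24 - 6 * y ^ 5 / 720)) y := by
        have h1 : HasDerivAt (fun y : ℝ => 1 - y ^ 2 / 2 + y ^ 4 / 24 - y ^ 6 / 720)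
            (0 - 2 * y / 2 + 4 * y ^ 3 / 24 - 6 * y ^ 5 / 720) y := by
          have := (((hasDerivAt_const y (1:ℝ)).sub ((hasDerivAt_pow 2 y).div_const 2)).add
            ((hasDerivAt_pow 4 y).div_const 24)).sub ((hasDerivAt_pow 6 y).div_const 720)
          exact this.congr_deriv (by norm_num <;> ring)
        exact (Real.hasDerivAt_cos y).sub h1
      rw [hd.deriv]
      nlinarith [sin_le_quintic y hy.le]
  have h := mono (self_mem_Ici) (mem_Ici.2 hx) hx
  simp only [Real.cos_zero] at h
  nlinarith [h]

/-- Cusa–Huygens inequality on `[0, π]`. -/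
private lemma cusa (u : ℝ) (h0 : 0 ≤ u) (h1 : u ≤ π) :
    3 * Real.sin u ≤ u * (2 + Real.cos u) := by
  have hu2 : u ^ 2 ≤ 12 := by nlinarith [Real.pi_lt_d2]
  have h3 := sin_le_quintic u h0
  have h4 := mul_le_mul_of_nonneg_left (cos_ge_sextic u h0) h0
  nlinarith [mul_nonneg (show (0:ℝ) ≤ 12 - u ^ 2 by linarith) (pow_nonneg h0 5)]

private lemma g_mono : MonotoneOn
    (fun x : ℝ => 3 * Real.log (Real.sin x) - 3 * Real.log x - Real.log (Real.cos x))
    (Ioo 0 (π / 2)) := by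
  have hsin : ∀ x ∈ Ioo (0:ℝ) (π / 2), 0 < Real.sin x := fun x hx =>
    Real.sin_pos_of_pos_of_lt_pi hx.1 (hx.2.trans (half_lt_self Real.pi_pos))
  have hcos : ∀ x ∈ Ioo (0:ℝ) (π / 2), 0 < Real.cos x := fun x hx =>
    Real.cos_pos_of_mem_Ioo ⟨by linarith [hx.1, Real.pi_pos], hx.2⟩
  have hder : ∀ x ∈ Ioo (0:ℝ) (π / 2), HasDerivAt
      (fun x : ℝ => 3 * Real.log (Real.sin x) - 3 * Real.log x - Real.log (Real.cos x))
      (3 * (Real.cos x / Real.sin x) - 3 * x⁻¹ - (-Real.sin x / Real.cos x)) x := by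
    intro x hx
    have h1 : HasDerivAt (fun y : ℝ => Real.log (Real.sin y)) (Real.cos x / Real.sin x) x :=
      (Real.hasDerivAt_sin x).log (hsin x hx).ne'
    have h2 : HasDerivAt (fun y : ℝ => Real.log y) x⁻¹ x := Real.hasDerivAt_log hx.1.ne'
    have h3 : HasDerivAt (fun y : ℝ => Real.log (Real.cos y)) (-Real.sin x / Real.cos x) x :=
      (Real.hasDerivAt_cos x).log (hcos x hx).ne'
    exact ((h1.const_mul 3).sub (h2.const_mul 3)).sub h3
  apply monotoneOn_of_deriv_nonneg (convex_Ioo 0 (π / 2))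
  · apply ContinuousOn.sub
    apply ContinuousOn.sub
    · exact (Real.continuous_sin.continuousOn.log
        (fun x hx => (hsin x hx).ne')).const_smul (3:ℝ) |>.congr (fun x _ => by simp [smul_eq_mul])
    · exact (Real.continuousOn_log.mono (fun x hx => ne_of_gt hx.1)).const_smul (3:ℝ) |>.congr
        (fun x _ => by simp [smul_eq_mul])
    · exact Real.continuous_cos.continuousOn.log (fun x hx => (hcos x hx).ne')
  · rw [(isOpen_Ioo).interior_eq]
    exact fun x hx => ((hder x hx).differentiableAt).differentiableWithinAt
  · rw [(isOpen_Ioo).interior_eq]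
    intro x hx
    rw [(hder x hx).deriv]
    have hx0 := hx.1
    have hs := hsin x hx
    have hc := hcos x hx
    have key := cusa (2 * x) (by linarith) (by linarith [hx.2])
    rw [Real.sin_two_mul, Real.cos_two_mul] at key
    have expand : 3 * (Real.cos x / Real.sin x) - 3 * x⁻¹ - (-Real.sin x / Real.cos x)
        = (x * (2 * Real.cos x ^ 2 + 1) - 3 * (Real.sin x * Real.cos x))
          / (x * Real.sin x * Real.cos x) := by
      field_simp
      linear_combination x * (Real.sin_sq_add_cos_sq x)
    rw [expand]
    apply div_nonneg _ (by positivity)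
    nlinarith [key]

theorem GA_y_le_x_pow_four (A : ℤ) (hA : 3 ≤ A) (t : ℝ) (ht0 : 0 < t)
    (ht1 : t ≤ π / (2 * A)) :
    Real.sin (2 * A * t) / (A * Real.sin (2 * t)) ≤
      (Real.sin (A * t) / (A * Real.sin t)) ^ 4 := by
  have ha3 : (3:ℝ) ≤ (A:ℝ) := by exact_mod_cast hA
  set a : ℝ := (A:ℝ) with ha_def
  have ha0 : 0 < a := by linarith
  have hs_le : a * t ≤ π / 2 := by
    have h := mul_le_mul_of_nonneg_left ht1 ha0.le
    have : a * (π / (2 * a)) = π / 2 := by field_simp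
    linarith [this ▸ h]
  have ht_lt : t < a * t := by nlinarith
  have ht_pi : t < π / 2 := lt_of_lt_of_le ht_lt hs_le
  have hsint : 0 < Real.sin t :=
    Real.sin_pos_of_pos_of_lt_pi ht0 (by linarith [Real.pi_pos])
  have hcost : 0 < Real.cos t := Real.cos_pos_of_mem_Ioo ⟨by linarith [Real.pi_pos], ht_pi⟩
  have hsins : 0 < Real.sin (a * t) :=
    Real.sin_pos_of_pos_of_lt_pi (by positivity) (by linarith [Real.pi_pos])
  have hcoss : 0 ≤ Real.cos (a * t) :=
    Real.cos_nonneg_of_mem_Icc ⟨by nlinarith [Real.pi_pos], hs_le⟩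
  have key : a ^ 3 * Real.sin t ^ 3 * Real.cos (a * t) ≤ Real.sin (a * t) ^ 3 * Real.cos t := by
    rcases lt_or_eq_of_le hs_le with hlt | heq
    · have hcoss' : 0 < Real.cos (a * t) :=
        Real.cos_pos_of_mem_Ioo ⟨by nlinarith [Real.pi_pos], hlt⟩
      have hmono := g_mono ⟨ht0, ht_pi⟩ ⟨by positivity, hlt⟩ ht_lt.le
      have hlog : Real.log (Real.sin t ^ 3 * (a * t) ^ 3 * Real.cos (a * t)) ≤
          Real.log (Real.sin (a * t) ^ 3 * t ^ 3 * Real.cos t) := by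
        rw [Real.log_mul (by positivity) (by positivity),
          Real.log_mul (by positivity) (by positivity),
          Real.log_mul (by positivity) (by positivity),
          Real.log_mul (by positivity) (by positivity),
          Real.log_pow, Real.log_pow, Real.log_pow, Real.log_pow]
        push_cast
        have hm2 := hmono
        dsimp only at hm2
        linarith
      have hprod := (Real.log_le_log_iff (by positivity) (by positivity)).mp hlog
      have h3 : (0:ℝ) < t ^ 3 := by positivity
      refine le_of_mul_le_mul_right ?_ h3
      calc a ^ 3 * Real.sin t ^ 3 * Real.cos (a * t) * t ^ 3
          = Real.sin t ^ 3 * (a * t) ^ 3 * Real.cos (a * t) := by ring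
        _ ≤ Real.sin (a * t) ^ 3 * t ^ 3 * Real.cos t := hprod
        _ = Real.sin (a * t) ^ 3 * Real.cos t * t ^ 3 := by ring
    · rw [heq, Real.cos_pi_div_two, Real.sin_pi_div_two, mul_zero]
      nlinarith [hcost]
  rw [show 2 * a * t = 2 * (a * t) by ring, Real.sin_two_mul, Real.sin_two_mul, div_pow,
    div_le_div_iff₀ (by positivity) (by positivity)]
  have hm := mul_le_mul_of_nonneg_left key
    (show (0:ℝ) ≤ 2 * a * Real.sin (a * t) * Real.sin t by positivity)
  nlinarith [hm]
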